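/- Let k > 0 and b_h ≥ 0 be real constants, and let e, w : ℝ → ℝ with e differentiable satisfying e'(t) = w(t) − k·e(t) and |w(t)| ≤ b_h for all t ≥ 0. Then limsup_{t → ∞} |e(t)| ≤ b_h/k. -/

import Mathlib

open Filter Real

lemma exp_kt_deriv (k t : ℝ) : HasDerivAt (fun s => Real.exp (k * s)) (Real.exp (k * t) * k) t := by
  have h1 : HasDerivAt (fun s : ℝ => k * s) k t := by
    simpa using (hasDerivAt_id t).const_mul k
  exact (Real.hasDerivAt_exp (k * t)).comp t h1

/-- Convergence statement of Theorem 1: the observer estimation error `e`,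
governed by `e' = w − k·e` with `|w| ≤ b_h`, is ultimately bounded by `b_h/k`. -/
theorem stmt_6 (k b_h : ℝ) (hk : 0 < k) (hbh : 0 ≤ b_h)
    (e w : ℝ → ℝ)
    (hderiv : ∀ t : ℝ, 0 ≤ t → HasDerivAt e (w t - k * e t) t)
    (hw : ∀ t : ℝ, 0 ≤ t → |w t| ≤ b_h) :
    Filter.limsup (fun t => |e t|) Filter.atTop ≤ b_h / k := by
  set c := b_h / k with hc
  have hck : c * k = b_h := div_mul_cancel₀ _ hk.ne'
  have hc0 : 0 ≤ c := div_nonneg hbh hk.le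
  -- continuity of e on [0,∞)
  have hecont : ContinuousOn e (Set.Ici (0:ℝ)) := fun t ht =>
    (hderiv t ht).continuousAt.continuousWithinAt
  have hint : interior (Set.Ici (0:ℝ)) = Set.Ioi 0 := interior_Ici
  -- F t = exp(k t) * (e t - c) is antitone on Ici 0
  have hFd : ∀ t : ℝ, 0 ≤ t →
      HasDerivAt (fun s => Real.exp (k * s) * (e s - c))
        (Real.exp (k * t) * (w t - b_h)) t := by
    intro t ht
    have := (exp_kt_deriv k t).mul ((hderiv t ht).sub_const c)
    refine this.congr_deriv ?_
    rw [← hck]; ring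
  have hGd : ∀ t : ℝ, 0 ≤ t →
      HasDerivAt (fun s => Real.exp (k * s) * (e s + c))
        (Real.exp (k * t) * (w t + b_h)) t := by
    intro t ht
    have := (exp_kt_deriv k t).mul ((hderiv t ht).add_const c)
    refine this.congr_deriv ?_
    rw [← hck]; ring
  have hF : AntitoneOn (fun s => Real.exp (k * s) * (e s - c)) (Set.Ici 0) := by
    apply antitoneOn_of_deriv_nonpos (convex_Ici 0)
    · exact (Real.continuous_exp.comp (continuous_const.mul continuous_id)).continuousOn.mul
        (hecont.sub continuousOn_const)
    · intro x hx
      rw [hint] at hx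
      exact (hFd x (le_of_lt hx)).differentiableAt.differentiableWithinAt
    · intro x hx
      rw [hint] at hx
      rw [(hFd x (le_of_lt hx)).deriv]
      have : w x - b_h ≤ 0 := by
        have := (abs_le.mp (hw x (le_of_lt hx))).2; linarith
      exact mul_nonpos_of_nonneg_of_nonpos (Real.exp_pos _).le this
  have hG : MonotoneOn (fun s => Real.exp (k * s) * (e s + c)) (Set.Ici 0) := by
    apply monotoneOn_of_deriv_nonneg (convex_Ici 0)
    · exact (Real.continuous_exp.comp (continuous_const.mul continuous_id)).continuousOn.mul
        (hecont.add continuousOn_const)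
    · intro x hx
      rw [hint] at hx
      exact (hGd x (le_of_lt hx)).differentiableAt.differentiableWithinAt
    · intro x hx
      rw [hint] at hx
      rw [(hGd x (le_of_lt hx)).deriv]
      have : 0 ≤ w x + b_h := by
        have := (abs_le.mp (hw x (le_of_lt hx))).1; linarith
      exact mul_nonneg (Real.exp_pos _).le this
  -- key pointwise bound
  have key : ∀ t : ℝ, 0 ≤ t → |e t| ≤ Real.exp (-(k * t)) * (|e 0| + c) + c := by
    intro t ht
    have hexp : (0:ℝ) < Real.exp (k * t) := Real.exp_pos _
    have h1 : Real.exp (k * t) * (e t - c) ≤ e 0 - c := by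
      have := hF (Set.self_mem_Ici) (Set.mem_Ici.mpr ht) ht
      simpa using this
    have h2 : e 0 + c ≤ Real.exp (k * t) * (e t + c) := by
      have := hG (Set.self_mem_Ici) (Set.mem_Ici.mpr ht) ht
      simpa using this
    have hinv : Real.exp (-(k * t)) = (Real.exp (k * t))⁻¹ := Real.exp_neg _
    set E := Real.exp (-(k * t)) with hE
    have hE0 : 0 < E := Real.exp_pos _
    have hEE : E * Real.exp (k * t) = 1 := by
      rw [hE, ← Real.exp_add]; ring_nf; exact Real.exp_zero
    have h1' : e t - c ≤ E * (e 0 - c) := by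
      calc e t - c = (E * Real.exp (k * t)) * (e t - c) := by rw [hEE]; ring
        _ = E * (Real.exp (k * t) * (e t - c)) := by ring
        _ ≤ E * (e 0 - c) := mul_le_mul_of_nonneg_left h1 hE0.le
    have h2' : E * (e 0 + c) ≤ e t + c := by
      calc E * (e 0 + c) ≤ E * (Real.exp (k * t) * (e t + c)) :=
            mul_le_mul_of_nonneg_left h2 hE0.le
        _ = (E * Real.exp (k * t)) * (e t + c) := by ring
        _ = e t + c := by rw [hEE]; ring
    have ha : e 0 - c ≤ |e 0| + c := by have := le_abs_self (e 0); linarith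
    have hb : -(|e 0| + c) ≤ e 0 + c := by have := neg_abs_le (e 0); linarith
    rw [abs_le]
    constructor
    · nlinarith [mul_le_mul_of_nonneg_left hb hE0.le, h2']
    · nlinarith [mul_le_mul_of_nonneg_left ha hE0.le, h1']
  -- limsup part
  have hlim : Tendsto (fun t => Real.exp (-(k * t)) * (|e 0| + c) + c) atTop (nhds c) := by
    have hkt : Tendsto (fun t : ℝ => k * t) atTop atTop :=
      Filter.Tendsto.const_mul_atTop hk tendsto_id
    have h0 : Tendsto (fun t : ℝ => Real.exp (-(k * t))) atTop (nhds 0) :=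
      Real.tendsto_exp_atBot.comp (Filter.tendsto_neg_atTop_atBot.comp hkt)
    have := (h0.mul_const (|e 0| + c)).add_const c
    simpa using this
  have hev : (fun t => |e t|) ≤ᶠ[atTop] fun t => Real.exp (-(k * t)) * (|e 0| + c) + c :=
    eventually_atTop.mpr ⟨0, key⟩
  calc Filter.limsup (fun t => |e t|) atTop
      ≤ Filter.limsup (fun t => Real.exp (-(k * t)) * (|e 0| + c) + c) atTop := by
        exact Filter.limsup_le_limsup hev
          (Filter.isCoboundedUnder_le_of_le atTop (fun x => abs_nonneg (e x)))
          hlim.isBoundedUnder_le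
    _ = c := hlim.limsup_eq
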